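/- Let J be the Jacobi matrix on ℓ²(ℕ) with off-diagonal entries a_n > 0 and real diagonal entries b_n. If Σ_{n∈ℕ} 1/a_n = ∞, then J is essentially self-adjoint on the finitely supported sequences C_c(ℕ). -/

import Mathlib

noncomputable section

open scoped ComplexConjugate

namespace DefIdx

/-- The Hilbert space `ℓ²(V)` of square-summable complex functions on `V`. -/
abbrev L2 (V : Type*) := lp (fun _ : V => ℂ) 2

lemma memℓp_of_finite {V : Type*} {f : V → ℂ} (h : {x | f x ≠ 0}.Finite) :
    Memℓp f 2 :=
  (memℓp_zero h).of_exponent_ge (zero_le)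

/-- The subspace `C_c(V)` of finitely supported elements of `ℓ²(V)`. -/
def Cc (V : Type*) : Submodule ℂ (L2 V) where
  carrier := {f | {x | (f : ∀ _ : V, ℂ) x ≠ 0}.Finite}
  zero_mem' := by
    simp only [Set.mem_setOf_eq, lp.coeFn_zero, Pi.zero_apply, ne_eq, not_true_eq_false]
    simp
  add_mem' := by
    intro f g hf hg
    refine (hf.union hg).subset ?_
    intro x hx
    simp only [Set.mem_setOf_eq, lp.coeFn_add, Pi.add_apply] at hx ⊢
    by_contra hc
    try push_neg at hc
    simp only [Set.mem_union, Set.mem_setOf_eq, not_or, not_not] at hc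
    simp [hc.1, hc.2] at hx
  smul_mem' := by
    intro c f hf
    refine hf.subset ?_
    intro x hx
    simp only [Set.mem_setOf_eq, lp.coeFn_smul, Pi.smul_apply, smul_eq_mul] at hx ⊢
    intro h0
    simp [h0] at hx

section Adjacency

variable {V : Type*}

/-- The pointwise action of the adjacency matrix of a locally finite graph. -/
def adjA (G : SimpleGraph V) (hG : G.LocallyFinite) (f : V → ℂ) (x : V) : ℂ :=
  ∑ y ∈ @SimpleGraph.neighborFinset V G x (hG x), f y

lemma adjA_support (G : SimpleGraph V) (hG : G.LocallyFinite) {f : V → ℂ}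
    (hf : {x | f x ≠ 0}.Finite) : {x | adjA G hG f x ≠ 0}.Finite := by
  have hsub : {x | adjA G hG f x ≠ 0} ⊆ ⋃ y ∈ {x | f x ≠ 0}, (G.neighborSet y) := by
    intro x hx
    obtain ⟨y, hy, hfy⟩ := Finset.exists_ne_zero_of_sum_ne_zero hx
    have hadj : G.Adj x y := by
      have := @SimpleGraph.mem_neighborFinset V G x (hG x) y
      exact this.mp hy
    exact Set.mem_biUnion hfy (SimpleGraph.mem_neighborSet G y x |>.mpr hadj.symm)
  exact (hf.biUnion fun y _ => by haveI := hG y; exact (G.neighborSet y).toFinite).subset hsub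

/-- The adjacency operator of a locally finite graph, as a densely defined operator
on `ℓ²(V)` with domain the finitely supported functions. -/
def adjOp (G : SimpleGraph V) (hG : G.LocallyFinite) : L2 V →ₗ.[ℂ] L2 V where
  domain := Cc V
  toFun :=
    { toFun := fun f => ⟨adjA G hG f, memℓp_of_finite (adjA_support G hG f.2)⟩
      map_add' := by
        intro f g
        apply lp.ext
        funext x
        simp only [lp.coeFn_add, Pi.add_apply]
        show adjA G hG (((f : L2 V) + (g : L2 V) : L2 V)) x = _
        simp only [adjA, lp.coeFn_add, Pi.add_apply]
        exact Finset.sum_add_distrib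
      map_smul' := by
        intro c f
        apply lp.ext
        funext x
        simp only [RingHom.id_apply, lp.coeFn_smul, Pi.smul_apply, smul_eq_mul]
        show adjA G hG ((c • (f : L2 V) : L2 V)) x = _
        simp only [adjA, lp.coeFn_smul, Pi.smul_apply, smul_eq_mul]
        exact (Finset.mul_sum _ _ _).symm }

/-- The pointwise action of the combinatorial (physical) Laplacian. -/
def lapA (G : SimpleGraph V) (hG : G.LocallyFinite) (f : V → ℂ) (x : V) : ℂ :=
  ∑ y ∈ @SimpleGraph.neighborFinset V G x (hG x), (f x - f y)

lemma lapA_support (G : SimpleGraph V) (hG : G.LocallyFinite) {f : V → ℂ}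
    (hf : {x | f x ≠ 0}.Finite) : {x | lapA G hG f x ≠ 0}.Finite := by
  have hsub : {x | lapA G hG f x ≠ 0} ⊆
      {x | f x ≠ 0} ∪ ⋃ y ∈ {x | f x ≠ 0}, (G.neighborSet y) := by
    intro x hx
    by_contra hc
    simp only [Set.mem_union, Set.mem_setOf_eq, not_or, not_not] at hc
    obtain ⟨hfx, hmem⟩ := hc
    apply hx
    show lapA G hG f x = 0
    unfold lapA
    refine Finset.sum_eq_zero fun y hy => ?_
    have hadj : G.Adj x y := (@SimpleGraph.mem_neighborFinset V G x (hG x) y).mp hy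
    have hfy : f y = 0 := by
      by_contra hfy
      exact hmem (Set.mem_biUnion hfy ((SimpleGraph.mem_neighborSet G y x).mpr hadj.symm))
    rw [hfx, hfy, sub_zero]
  refine Set.Finite.subset ?_ hsub
  exact hf.union (hf.biUnion fun y _ => by haveI := hG y; exact (G.neighborSet y).toFinite)

/-- The combinatorial (physical) Laplacian of a locally finite graph, as a densely
defined operator on `ℓ²(V)` with domain the finitely supported functions. -/
def lapOp (G : SimpleGraph V) (hG : G.LocallyFinite) : L2 V →ₗ.[ℂ] L2 V where
  domain := Cc V
  toFun :=
    { toFun := fun f => ⟨lapA G hG f, memℓp_of_finite (lapA_support G hG f.2)⟩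
      map_add' := by
        intro f g
        apply lp.ext
        funext x
        simp only [lp.coeFn_add, Pi.add_apply]
        show lapA G hG (((f : L2 V) + (g : L2 V) : L2 V)) x = _
        simp only [lapA, lp.coeFn_add, Pi.add_apply]
        rw [← Finset.sum_add_distrib]
        exact Finset.sum_congr rfl fun y _ => by ring
      map_smul' := by
        intro c f
        apply lp.ext
        funext x
        simp only [RingHom.id_apply, lp.coeFn_smul, Pi.smul_apply, smul_eq_mul]
        show lapA G hG ((c • (f : L2 V) : L2 V)) x = _
        simp only [lapA, lp.coeFn_smul, Pi.smul_apply, smul_eq_mul]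
        rw [Finset.mul_sum]
        exact Finset.sum_congr rfl fun y _ => by ring }

end Adjacency

section Jacobi

/-- The pointwise action of the Jacobi matrix with off-diagonal entries `a n` and
diagonal entries `b n` (with the convention `a (-1) = 0`). -/
def jacA (a b : ℕ → ℝ) (f : ℕ → ℂ) (n : ℕ) : ℂ :=
  (if n = 0 then 0 else (a (n - 1) : ℂ) * f (n - 1)) + (b n : ℂ) * f n + (a n : ℂ) * f (n + 1)

lemma jacA_support (a b : ℕ → ℝ) {f : ℕ → ℂ} (hf : {n | f n ≠ 0}.Finite) :
    {n | jacA a b f n ≠ 0}.Finite := by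
  have hsub : {n | jacA a b f n ≠ 0} ⊆
      (fun m => m + 1) '' {n | f n ≠ 0} ∪ {n | f n ≠ 0} ∪ (fun m => m - 1) '' {n | f n ≠ 0} := by
    intro n hn
    by_contra hc
    simp only [Set.mem_union, not_or] at hc
    apply hn
    show jacA a b f n = 0
    have h1 : f n = 0 := by
      by_contra h; exact hc.1.2 h
    have h3 : f (n + 1) = 0 := by
      by_contra h
      exact hc.2 ⟨n + 1, h, by show n + 1 - 1 = n; omega⟩
    rcases Nat.eq_zero_or_pos n with h0 | h0
    · subst h0; simp [jacA, h1, h3]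
    · have h2 : f (n - 1) = 0 := by
        by_contra h
        exact hc.1.1 ⟨n - 1, h, by show n - 1 + 1 = n; omega⟩
      simp [jacA, h1, h2, h3]
  refine Set.Finite.subset ?_ hsub
  exact ((hf.image _).union hf).union (hf.image _)

/-- The Jacobi matrix with off-diagonal entries `a n > 0` and diagonal entries `b n`,
as a densely defined operator on `ℓ²(ℕ)` with domain the finitely supported sequences. -/
def jacOp (a b : ℕ → ℝ) : L2 ℕ →ₗ.[ℂ] L2 ℕ where
  domain := Cc ℕ
  toFun :=
    { toFun := fun f => ⟨jacA a b f, memℓp_of_finite (jacA_support a b f.2)⟩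
      map_add' := by
        intro f g
        apply lp.ext
        funext n
        simp only [lp.coeFn_add, Pi.add_apply]
        show jacA a b (((f : L2 ℕ) + (g : L2 ℕ) : L2 ℕ)) n = _
        simp only [jacA, lp.coeFn_add, Pi.add_apply]
        split <;> ring
      map_smul' := by
        intro c f
        apply lp.ext
        funext n
        simp only [RingHom.id_apply, lp.coeFn_smul, Pi.smul_apply, smul_eq_mul]
        show jacA a b ((c • (f : L2 ℕ) : L2 ℕ)) n = _
        simp only [jacA, lp.coeFn_smul, Pi.smul_apply, smul_eq_mul]
        split <;> ring }

end Jacobi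

section Eta

variable {H : Type*} [NormedAddCommGroup H] [InnerProductSpace ℂ H] [CompleteSpace H]

/-- The deficiency subspace `ker (T* - z)` of a (partially defined) operator. -/
def defSubspace (T : H →ₗ.[ℂ] H) (z : ℂ) : Submodule ℂ T.adjoint.domain :=
  LinearMap.ker (T.adjoint.toFun - z • T.adjoint.domain.subtype)

/-- The deficiency index `η₊(T) = dim ker (T* - i)`. -/
def etaP (T : H →ₗ.[ℂ] H) : Cardinal := Module.rank ℂ (defSubspace T Complex.I)

/-- The deficiency index `η₋(T) = dim ker (T* + i)`. -/
def etaM (T : H →ₗ.[ℂ] H) : Cardinal := Module.rank ℂ (defSubspace T (-Complex.I))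

/-- A partially defined operator is symmetric if `⟪T f, g⟫ = ⟪f, T g⟫` on its domain. -/
def IsSymm (T : H →ₗ.[ℂ] H) : Prop :=
  ∀ f g : T.domain, (inner ℂ (T f) (g : H) : ℂ) = inner ℂ (f : H) (T g)

/-- A densely defined operator is essentially self-adjoint if its closure is self-adjoint. -/
def EssSelfAdj (T : H →ₗ.[ℂ] H) : Prop :=
  T.closure.adjoint = T.closure

/-- The restriction of the sum of two partially defined operators to the domain
of the first one, assuming domain inclusion. -/
def sumRestrict (S T : H →ₗ.[ℂ] H) (h : S.domain ≤ T.domain) : H →ₗ.[ℂ] H :=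
  ⟨S.domain, S.toFun + T.toFun.comp (Submodule.inclusion h)⟩

/-- The sum of a partially defined operator and a bounded operator, with the
domain of the former. -/
def addBdd (S : H →ₗ.[ℂ] H) (B : H →L[ℂ] H) : H →ₗ.[ℂ] H :=
  ⟨S.domain, S.toFun + (B : H →ₗ[ℂ] H).comp S.domain.subtype⟩

end Eta

section Graphs

variable {V : Type*}

/-- The sphere of radius `n` around the vertex `v` (w.r.t. the graph metric). -/
def sphere (G : SimpleGraph V) (v : V) (n : ℕ) : Set V := {w | G.dist v w = n}

/-- A connected graph is an antitree with root `v` if every vertex `w ≠ v` at distance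
`n ≥ 1` from `v` has exactly `S_{n-1}(v) ∪ S_{n+1}(v)` as its set of neighbours. -/
def IsAntitree (G : SimpleGraph V) (v : V) : Prop :=
  G.Connected ∧ ∀ w, w ≠ v →
    G.neighborSet w = sphere G v (G.dist v w - 1) ∪ sphere G v (G.dist v w + 1)

/-- A function is radially symmetric (w.r.t. the root `v`) if it is constant on
each sphere around `v`. -/
def RadSymm (G : SimpleGraph V) (v : V) (f : V → ℂ) : Prop :=
  ∀ x y, G.dist v x = G.dist v y → f x = f y

/-- The average of `f` over the sphere of radius `n` around `v`. -/
def sphAvg (G : SimpleGraph V) (v : V) (hfin : ∀ n, (sphere G v n).Finite)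
    (f : V → ℂ) (n : ℕ) : ℂ :=
  (1 / ((sphere G v n).ncard : ℂ)) * ∑ y ∈ (hfin n).toFinset, f y

/-- The sphere-averaging map `P`. -/
def sphP (G : SimpleGraph V) (v : V) (hfin : ∀ n, (sphere G v n).Finite)
    (f : V → ℂ) (x : V) : ℂ :=
  sphAvg G v hfin f (G.dist v x)

/-- The disjoint union of `n` copies of a graph. -/
def copies (G : SimpleGraph V) (n : ℕ) : SimpleGraph (Fin n × V) where
  Adj p q := p.1 = q.1 ∧ G.Adj p.2 q.2
  symm := ⟨fun p q h => ⟨h.1.symm, h.2.symm⟩⟩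
  loopless := ⟨fun q h => G.loopless.irrefl q.2 h.2⟩

/-- The disjoint union of copies of a locally finite graph is locally finite. -/
def copiesLF (G : SimpleGraph V) (hG : G.LocallyFinite) (n : ℕ) :
    (copies G n).LocallyFinite := fun p =>
  Set.Finite.fintype (by
    haveI := hG p.2
    have hsub : (copies G n).neighborSet p ⊆ (fun w => (p.1, w)) '' (G.neighborSet p.2) := by
      rintro ⟨i, w⟩ ⟨h1, h2⟩
      exact ⟨w, h2, by simp [h1]⟩
    exact ((G.neighborSet p.2).toFinite.image _).subset hsub)

end Graphs



section VonNeumann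

open LinearPMap

variable {H : Type*} [NormedAddCommGroup H] [InnerProductSpace ℂ H] [CompleteSpace H]
variable {T : H →ₗ.[ℂ] H}

lemma mem_adjoint_graph_iff (hd : Dense (T.domain : Set H)) (p : H × H) :
    p ∈ T.adjoint.graph ↔ ∀ x : T.domain, (inner ℂ p.2 (x : H) : ℂ) = inner ℂ p.1 (T x) := by
  constructor
  · rintro hp x
    rw [LinearPMap.mem_graph_iff] at hp
    obtain ⟨y, hy1, hy2⟩ := hp
    rw [← hy1, ← hy2]
    exact LinearPMap.adjoint_isFormalAdjoint hd y x
  · intro h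
    have hy : p.1 ∈ T.adjoint.domain :=
      LinearPMap.mem_adjoint_domain_of_exists _ ⟨p.2, fun x => h x⟩
    rw [LinearPMap.mem_graph_iff]
    exact ⟨⟨p.1, hy⟩, rfl, LinearPMap.adjoint_apply_eq hd _ (fun x => h x)⟩

lemma adjoint_isClosed (hd : Dense (T.domain : Set H)) : T.adjoint.IsClosed := by
  have : (T.adjoint.graph : Set (H × H)) =
      ⋂ x : T.domain, {p : H × H | (inner ℂ p.2 (x : H) : ℂ) = inner ℂ p.1 (T x)} := by
    ext p
    simp only [SetLike.mem_coe, mem_adjoint_graph_iff hd, Set.mem_iInter, Set.mem_setOf_eq]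
  rw [LinearPMap.IsClosed, this]
  refine isClosed_iInter fun x => isClosed_eq ?_ ?_
  · exact (continuous_snd.inner continuous_const)
  · exact (continuous_fst.inner continuous_const)

theorem essSelfAdj_of_ker (hd : Dense (T.domain : Set H)) (hsymm : IsSymm T)
    (hker : ∀ z : ℂ, (z = Complex.I ∨ z = -Complex.I) →
      ∀ y : T.adjoint.domain, T.adjoint y = z • (y : H) → (y : H) = 0) :
    EssSelfAdj T := by
  -- basic facts
  have hfa : T.IsFormalAdjoint T := fun x y => hsymm x y
  have hTle : T ≤ T.adjoint := hfa.le_adjoint hd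
  have hclosable : T.IsClosable := (adjoint_isClosed hd).isClosable.leIsClosable hTle
  set S := T.closure with hSdef
  have hTleS : T ≤ S := T.le_closure
  have hS_closed : S.IsClosed := hclosable.closure_isClosed
  have hdS : Dense (S.domain : Set H) := by
    refine hd.mono ?_
    exact fun x hx => hTleS.1 hx
  -- graph of S is closure of graph of T
  have hgraph : (S.graph : Set (H × H)) = closure (T.graph : Set (H × H)) := by
    rw [← hclosable.graph_closure_eq_closure_graph]
    rfl
  -- S is symmetric
  have hkey : ∀ p ∈ closure (T.graph : Set (H × H)), ∀ q ∈ closure (T.graph : Set (H × H)),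
      (inner ℂ p.2 q.1 : ℂ) = inner ℂ p.1 q.2 := by
    have step1 : ∀ q ∈ T.graph, ∀ p ∈ closure (T.graph : Set (H × H)),
        (inner ℂ p.2 q.1 : ℂ) = inner ℂ p.1 q.2 := by
      intro q hq
      have : IsClosed {p : H × H | (inner ℂ p.2 q.1 : ℂ) = inner ℂ p.1 q.2} :=
        isClosed_eq (continuous_snd.inner continuous_const) (continuous_fst.inner continuous_const)
      intro p hp
      refine this.closure_subset_iff.mpr ?_ hp
      intro r hr
      simp only [SetLike.mem_coe] at hr
      rw [LinearPMap.mem_graph_iff] at hq hr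
      obtain ⟨x, hx1, hx2⟩ := hq
      obtain ⟨y, hy1, hy2⟩ := hr
      simp only [Set.mem_setOf_eq, ← hx1, ← hx2, ← hy1, ← hy2]
      exact hsymm y x
    intro p hp q hq
    have : IsClosed {q : H × H | (inner ℂ p.2 q.1 : ℂ) = inner ℂ p.1 q.2} :=
      isClosed_eq (continuous_const.inner continuous_fst) (continuous_const.inner continuous_snd)
    refine this.closure_subset_iff.mpr ?_ hq
    intro r hr
    exact step1 r hr p hp
  have hSsymm : S.IsFormalAdjoint S := by
    intro f g
    have hf : ((f : H), S f) ∈ closure (T.graph : Set (H × H)) := by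
      rw [← hgraph]; exact S.mem_graph f
    have hg : ((g : H), S g) ∈ closure (T.graph : Set (H × H)) := by
      rw [← hgraph]; exact S.mem_graph g
    exact hkey _ hf _ hg
  have hSle : S ≤ S.adjoint := hSsymm.le_adjoint hdS
  -- S.adjoint ≤ T.adjoint
  have hS'leT' : S.adjoint ≤ T.adjoint := by
    constructor
    · intro y hy
      refine LinearPMap.mem_adjoint_domain_of_exists _ ⟨S.adjoint ⟨y, hy⟩, fun x => ?_⟩
      obtain ⟨x', hx'1, hx'2⟩ := LinearPMap.exists_of_le hTleS x
      rw [hx'2, hx'1]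
      exact LinearPMap.adjoint_isFormalAdjoint hdS ⟨y, hy⟩ x'
    · intro y y' hyy'
      symm
      refine LinearPMap.adjoint_apply_eq hd _ fun x => ?_
      obtain ⟨x', hx'1, hx'2⟩ := LinearPMap.exists_of_le hTleS x
      rw [hx'2, hx'1, ← hyy']
      exact LinearPMap.adjoint_isFormalAdjoint hdS y x'
  -- kernel conditions transported to S
  have hkerS : ∀ z : ℂ, (z = Complex.I ∨ z = -Complex.I) →
      ∀ y : S.adjoint.domain, S.adjoint y = z • (y : H) → (y : H) = 0 := by
    intro z hz y hy
    obtain ⟨y', hy'1, hy'2⟩ := LinearPMap.exists_of_le hS'leT' y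
    refine hy'1 ▸ hker z hz y' ?_
    rw [← hy'2, hy, hy'1]
  -- norm estimate : for z purely imaginary with |z| = 1, ‖S x + z • x‖ ≥ ‖x‖
  have hest : ∀ z : ℂ, (z = Complex.I ∨ z = -Complex.I) → ∀ x : S.domain,
      ‖x‖ ≤ ‖S x + z • (x : H)‖ := by
    intro z hz x
    have hre : (inner ℂ (S x) (x : H) : ℂ).im = 0 := by
      have h1 : (inner ℂ (S x) (x : H) : ℂ) = inner ℂ (x : H) (S x) := hSsymm x x
      have h2 : (inner ℂ (x : H) (S x) : ℂ) = conj (inner ℂ (S x) (x : H) : ℂ) := by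
        rw [inner_conj_symm]
      rw [h2] at h1
      have := congrArg Complex.im h1
      simp only [Complex.conj_im] at this
      linarith
    have hnorm : ‖S x + z • (x : H)‖ ^ 2 = ‖S x‖ ^ 2 + ‖x‖ ^ 2 := by
      rw [@norm_add_sq ℂ]
      have hcross : RCLike.re (inner ℂ (S x) (z • (x : H)) : ℂ) = 0 := by
        rw [inner_smul_right]
        rcases hz with rfl | rfl
        · simp [Complex.mul_im, Complex.mul_re, hre]
        · simp [Complex.mul_im, Complex.mul_re, hre]
      rw [hcross]
      have : ‖z • (x : H)‖ = ‖x‖ := by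
        rcases hz with rfl | rfl <;> simp [norm_smul]
      rw [this]; ring
    nlinarith [norm_nonneg (S x + z • (x : H)), norm_nonneg (S x), sq_nonneg ‖S x‖,
      norm_nonneg (x : H)]
  -- Range of (S + I) is all of H
  have hsurj : ∀ w : H, ∃ x : S.domain, S x + Complex.I • (x : H) = w := by
    set L : S.domain →ₗ[ℂ] H := S.toFun + (Complex.I • S.domain.subtype) with hL
    have hLapp : ∀ x : S.domain, L x = S x + Complex.I • (x : H) := fun x => rfl
    set R : Submodule ℂ H := LinearMap.range L with hR
    -- R is closed
    have hRclosed : IsClosed (R : Set H) := by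
      rw [← isSeqClosed_iff_isClosed]
      intro wseq w hmem hlim
      choose xseq hxseq using fun n => (LinearMap.mem_range.mp (hmem n))
      -- (xseq n : H) is Cauchy
      have hcauchy : CauchySeq (fun n => (xseq n : H)) := by
        have hwc : CauchySeq wseq := hlim.cauchySeq
        rw [Metric.cauchySeq_iff] at hwc ⊢
        intro ε hε
        obtain ⟨N, hN⟩ := hwc ε hε
        refine ⟨N, fun m hm n hn => ?_⟩
        have h1 := hN m hm n hn
        rw [dist_eq_norm] at h1 ⊢
        refine lt_of_le_of_lt ?_ h1
        have key : ‖(xseq m : H) - (xseq n : H)‖ ≤ ‖L (xseq m - xseq n)‖ := by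
          have h5 := hest Complex.I (Or.inl rfl) (xseq m - xseq n)
          rw [hLapp]
          simpa using h5
        rw [← hxseq m, ← hxseq n, ← _root_.map_sub L]
        exact key
      obtain ⟨x, hx⟩ := cauchySeq_tendsto_of_complete hcauchy
      -- S (xseq n) converges to w - I • x
      have hSx : Filter.Tendsto (fun n => S (xseq n)) Filter.atTop (nhds (w - Complex.I • x)) := by
        have : (fun n => S (xseq n)) = fun n => wseq n - Complex.I • (xseq n : H) := by
          funext n
          rw [← hxseq n, hLapp]; abel
        rw [this]
        exact hlim.sub (hx.const_smul _)
      -- closed graph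
      have hgmem : (x, w - Complex.I • x) ∈ S.graph := by
        have := hS_closed.mem_of_tendsto
          (f := fun n => ((xseq n : H), S (xseq n))) (b := Filter.atTop)
          (hx.prodMk_nhds hSx) (Filter.Eventually.of_forall fun n => S.mem_graph (xseq n))
        exact this
      rw [LinearPMap.mem_graph_iff] at hgmem
      obtain ⟨y, hy1, hy2⟩ := hgmem
      refine LinearMap.mem_range.mpr ⟨y, ?_⟩
      rw [hLapp, hy2]
      simp only at hy1
      rw [hy1]
      module
    -- R is dense : orthogonal complement is trivial
    have hRdense : Rᗮ = ⊥ := by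
      rw [Submodule.eq_bot_iff]
      intro y hy
      have hy' : ∀ x : S.domain, (inner ℂ y (S x + Complex.I • (x:H)) : ℂ) = 0 := by
        intro x
        have h9 := (Submodule.mem_orthogonal' R y).mp hy (L x) (LinearMap.mem_range.mpr ⟨x, rfl⟩)
        rwa [hLapp] at h9
      have hmem : y ∈ S.adjoint.domain := by
        refine LinearPMap.mem_adjoint_domain_of_exists _ ⟨Complex.I • y, fun x => ?_⟩
        have := hy' x
        rw [inner_add_right, inner_smul_right] at this
        rw [inner_smul_left]
        have : (inner ℂ y (S x) : ℂ) = -(Complex.I * inner ℂ y (x : H)) := by linear_combination this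
        rw [this]
        simp [Complex.conj_I]
      have happ : S.adjoint ⟨y, hmem⟩ = Complex.I • y := by
        refine LinearPMap.adjoint_apply_eq hdS _ fun x => ?_
        have := hy' x
        rw [inner_add_right, inner_smul_right] at this
        rw [inner_smul_left]
        have h2 : (inner ℂ y (S x) : ℂ) = -(Complex.I * inner ℂ y (x : H)) := by linear_combination this
        rw [h2]
        simp [Complex.conj_I]
      exact hkerS Complex.I (Or.inl rfl) ⟨y, hmem⟩ happ
    have hRtop : R = ⊤ := by
      have h1 : R.topologicalClosure = ⊤ := by
        rw [← Submodule.orthogonal_orthogonal_eq_closure, hRdense, Submodule.bot_orthogonal_eq_top]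
      rw [← h1, hRclosed.submodule_topologicalClosure_eq]
    intro w
    obtain ⟨x, hx⟩ := LinearMap.mem_range.mp (hRtop ▸ Submodule.mem_top (x := w) : w ∈ R)
    exact ⟨x, hx⟩
  -- final step : S.adjoint ≤ S
  have hmain : ∀ Y : S.adjoint.domain, ∃ x : S.domain,
      ((Y : H) = (x : H)) ∧ S.adjoint Y = S x := by
    intro Y
    obtain ⟨x, hx⟩ := hsurj (S.adjoint Y + Complex.I • (Y : H))
    have hxd : (x : H) ∈ S.adjoint.domain := hSle.1 x.2
    have hxadj : S.adjoint ⟨(x : H), hxd⟩ = S x := by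
      obtain ⟨x', h1, h2⟩ := LinearPMap.exists_of_le hSle x
      rw [h2]
      congr 1
      exact Subtype.ext h1
    have hdiff : S.adjoint (Y - ⟨(x : H), hxd⟩) =
        (-Complex.I) • ((Y - ⟨(x : H), hxd⟩ : S.adjoint.domain) : H) := by
      rw [LinearPMap.map_sub, hxadj]
      have h1 : S x = S.adjoint Y + Complex.I • (Y : H) - Complex.I • (x : H) := by
        rw [← hx]; abel
      rw [h1]
      have h2 : ((Y - ⟨(x : H), hxd⟩ : S.adjoint.domain) : H) = (Y : H) - (x : H) := rfl
      rw [h2, neg_smul, smul_sub]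
      abel
    have hzero := hkerS (-Complex.I) (Or.inr rfl) _ hdiff
    have h2 : ((Y - ⟨(x : H), hxd⟩ : S.adjoint.domain) : H) = (Y : H) - (x : H) := rfl
    rw [h2] at hzero
    have hyx : (Y : H) = (x : H) := sub_eq_zero.mp hzero
    refine ⟨x, hyx, ?_⟩
    have h3 : S x + Complex.I • (x : H) = S.adjoint Y + Complex.I • (x : H) := by
      rw [hx, hyx]
    exact (add_right_cancel h3).symm
  have hfinal : S.adjoint ≤ S := by
    constructor
    · intro y hy
      obtain ⟨x, h1, _⟩ := hmain ⟨y, hy⟩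
      simp only at h1
      rw [h1]
      exact x.2
    · intro y y' hyy'
      obtain ⟨x, h1, h2⟩ := hmain y
      rw [h2]
      congr 1
      exact Subtype.ext (by rw [← hyy', h1])
  exact le_antisymm hfinal hSle

end VonNeumann

section JacobiConcrete

variable (a b : ℕ → ℝ)

lemma single_mem_Cc (n : ℕ) (v : ℂ) : lp.single 2 n v ∈ Cc ℕ := by
  refine (Set.finite_singleton n).subset ?_
  intro j hj
  simp only [Set.mem_setOf_eq] at hj
  simp only [Set.mem_singleton_iff]
  by_contra hne
  have h0 : (lp.single 2 n v : ∀ _ : ℕ, ℂ) j = 0 := by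
    rw [lp.single_apply]
    exact dif_neg hne
  exact hj h0


lemma dense_Cc : Dense ((Cc ℕ : Submodule ℂ (L2 ℕ)) : Set (L2 ℕ)) := by
  intro f
  have hf := lp.hasSum_single (E := fun _ : ℕ => ℂ) (p := 2) (by norm_num) f
  refine mem_closure_of_tendsto hf (Filter.Eventually.of_forall fun s => ?_)
  exact Submodule.sum_mem _ fun i _ => single_mem_Cc i (f i)

lemma jac_coeFn (f : (jacOp a b).domain) :
    (((jacOp a b) f : L2 ℕ) : ℕ → ℂ) = jacA a b ((f : L2 ℕ) : ℕ → ℂ) := rfl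

lemma sum_jac_symm (F G : ℕ → ℂ) (N : ℕ)
    (hF : ∀ n, N ≤ n → F n = 0) (hG : ∀ n, N ≤ n → G n = 0) :
    ∑ n ∈ Finset.range N, conj (jacA a b F n) * G n
      = ∑ n ∈ Finset.range N, conj (F n) * jacA a b G n := by
  rcases Nat.eq_zero_or_pos N with rfl | hN
  · simp
  obtain ⟨M, rfl⟩ : ∃ M, N = M + 1 := ⟨N - 1, by omega⟩
  have expandL : ∀ n, conj (jacA a b F n) * G n =
      (if n = 0 then 0 else (a (n-1) : ℂ) * conj (F (n-1)) * G n)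
        + (b n : ℂ) * conj (F n) * G n + (a n : ℂ) * conj (F (n+1)) * G n := by
    intro n
    simp only [jacA, map_add]
    split <;> · simp only [map_zero, map_mul, Complex.conj_ofReal]; ring
  have expandR : ∀ n, conj (F n) * jacA a b G n =
      (if n = 0 then 0 else (a (n-1) : ℂ) * conj (F n) * G (n-1))
        + (b n : ℂ) * conj (F n) * G n + (a n : ℂ) * conj (F n) * G (n+1) := by
    intro n
    simp only [jacA]
    split <;> ring
  have h13 : ∑ n ∈ Finset.range (M+1),
      (if n = 0 then 0 else (a (n-1) : ℂ) * conj (F (n-1)) * G n)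
      = ∑ n ∈ Finset.range (M+1), (a n : ℂ) * conj (F n) * G (n+1) := by
    rw [Finset.sum_range_succ'
      (fun n => if n = 0 then 0 else (a (n-1) : ℂ) * conj (F (n-1)) * G n) M,
      Finset.sum_range_succ]
    simp [hG (M+1) le_rfl]
  have h31 : ∑ n ∈ Finset.range (M+1), (a n : ℂ) * conj (F (n+1)) * G n
      = ∑ n ∈ Finset.range (M+1),
        (if n = 0 then 0 else (a (n-1) : ℂ) * conj (F n) * G (n-1)) := by
    rw [Finset.sum_range_succ,
      Finset.sum_range_succ'
      (fun n => if n = 0 then 0 else (a (n-1) : ℂ) * conj (F n) * G (n-1)) M]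
    simp [hF (M+1) le_rfl]
  simp only [expandL, expandR, Finset.sum_add_distrib]
  rw [h13, h31]
  ring

lemma jacOp_isSymm : IsSymm (jacOp a b) := by
  intro f g
  set F : ℕ → ℂ := ((f : L2 ℕ) : ℕ → ℂ) with hFdef
  set G : ℕ → ℂ := ((g : L2 ℕ) : ℕ → ℂ) with hGdef
  have hFfin : {x | F x ≠ 0}.Finite := f.2
  have hGfin : {x | G x ≠ 0}.Finite := g.2
  set s : Finset ℕ := hFfin.toFinset ∪ hGfin.toFinset with hs
  set N : ℕ := s.sup id + 1 with hNdef
  have hF : ∀ n, N ≤ n → F n = 0 := by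
    intro n hn
    by_contra h
    have hmem : n ∈ s := Finset.mem_union_left _ (hFfin.mem_toFinset.mpr h)
    have := Finset.le_sup (f := id) hmem
    simp only [id] at this
    omega
  have hG : ∀ n, N ≤ n → G n = 0 := by
    intro n hn
    by_contra h
    have hmem : n ∈ s := Finset.mem_union_right _ (hGfin.mem_toFinset.mpr h)
    have := Finset.le_sup (f := id) hmem
    simp only [id] at this
    omega
  have h1 : (inner ℂ ((jacOp a b) f) ((g : L2 ℕ)) : ℂ)
      = ∑ n ∈ Finset.range N, conj (jacA a b F n) * G n := by
    rw [lp.inner_eq_tsum]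
    simp only [RCLike.inner_apply']
    refine tsum_eq_sum fun n hn => ?_
    have : G n = 0 := hG n (by simpa using Finset.mem_range.not.mp hn)
    show conj (((jacOp a b) f : L2 ℕ) n) * G n = 0
    rw [this, mul_zero]
  have h2 : (inner ℂ ((f : L2 ℕ) : L2 ℕ) ((jacOp a b) g) : ℂ)
      = ∑ n ∈ Finset.range N, conj (F n) * jacA a b G n := by
    rw [lp.inner_eq_tsum]
    simp only [RCLike.inner_apply']
    refine tsum_eq_sum fun n hn => ?_
    have : F n = 0 := hF n (by simpa using Finset.mem_range.not.mp hn)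
    show conj (F n) * (((jacOp a b) g : L2 ℕ) n) = 0
    rw [this, map_zero, zero_mul]
  rw [h1, h2]
  exact sum_jac_symm a b F G N hF hG

set_option maxHeartbeats 1000000 in
lemma jac_ker (ha : ∀ n, 0 < a n) (hdiv : ¬ Summable (fun n => 1 / a n))
    (z : ℂ) (hz : z = Complex.I ∨ z = -Complex.I)
    (y : (jacOp a b).adjoint.domain) (hy : (jacOp a b).adjoint y = z • (y : L2 ℕ)) :
    (y : L2 ℕ) = 0 := by
  classical
  set u : ℕ → ℂ := ((y : L2 ℕ) : ℕ → ℂ) with hu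
  have hd : Dense (((jacOp a b).domain : Submodule ℂ (L2 ℕ)) : Set (L2 ℕ)) := dense_Cc
  -- Step 1: the conjugated eigenvalue equation, pointwise
  have hconj : ∀ n : ℕ, (a n : ℂ) * conj (u (n+1)) + (b n : ℂ) * conj (u n)
      + (if n = 0 then 0 else (a (n-1) : ℂ) * conj (u (n-1))) = conj z * conj (u n) := by
    intro n
    set e : L2 ℕ := lp.single 2 n (1 : ℂ) with he
    set x : (jacOp a b).domain := ⟨e, single_mem_Cc n 1⟩ with hx
    have hen : (e : ℕ → ℂ) n = 1 := lp.single_apply_self 2 n 1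
    have hene : ∀ j, j ≠ n → (e : ℕ → ℂ) j = 0 := by
      intro j hj
      rw [he, lp.single_apply]
      exact dif_neg hj
    have hfa := LinearPMap.adjoint_isFormalAdjoint hd y x
    rw [hy] at hfa
    -- LHS of hfa
    have hL : (inner ℂ (z • (y : L2 ℕ)) ((x : L2 ℕ)) : ℂ) = conj z * conj (u n) := by
      rw [inner_smul_left]
      congr 1
      have : (x : L2 ℕ) = e := rfl
      rw [this, he, lp.inner_single_right]
      simp [RCLike.inner_apply', hu]
    -- RHS of hfa
    have hR : (inner ℂ ((y : L2 ℕ)) (((jacOp a b) x : L2 ℕ)) : ℂ)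
        = (a n : ℂ) * conj (u (n+1)) + (b n : ℂ) * conj (u n)
          + (if n = 0 then 0 else (a (n-1) : ℂ) * conj (u (n-1))) := by
      rw [lp.inner_eq_tsum]
      simp only [RCLike.inner_apply']
      have hterm : ∀ k, conj (u k) * (((jacOp a b) x : L2 ℕ) k)
          = (if k = n+1 then (a n : ℂ) * conj (u (n+1)) else 0)
            + (if k = n then (b n : ℂ) * conj (u n) else 0)
            + (if k = n-1 then (if n = 0 then 0 else (a (n-1) : ℂ) * conj (u (n-1))) else 0) := by
        intro k
        have hj : (((jacOp a b) x : L2 ℕ) k) = jacA a b (e : ℕ → ℂ) k := rfl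
        rw [hj]
        by_cases hk1 : k = n + 1
        · subst hk1
          have h0 : ¬ (n + 1 = 0) := by omega
          have hi : n + 1 - 1 = n := by omega
          have e1 : (e : ℕ → ℂ) (n + 1 - 1) = 1 := by rw [hi]; exact hen
          have e2 : (e : ℕ → ℂ) (n + 1) = 0 := hene _ (by omega)
          have e3 : (e : ℕ → ℂ) (n + 1 + 1) = 0 := hene _ (by omega)
          rw [if_pos rfl, if_neg (by omega), if_neg (by omega)]
          simp only [jacA, if_neg h0, e1, e2, e3, hi, hen]
          ring
        · by_cases hk2 : k = n
          · rw [if_neg hk1, if_pos hk2, hk2]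
            by_cases hn0 : n = 0
            · subst hn0
              have e1 : (e : ℕ → ℂ) 1 = 0 := hene _ (by omega)
              rw [if_pos (by omega : (0:ℕ) = 0 - 1), if_pos rfl]
              simp only [jacA, if_pos rfl, hen, e1, if_true]
              ring
            · have e1 : (e : ℕ → ℂ) (n - 1) = 0 := hene _ (by omega)
              have e2 : (e : ℕ → ℂ) (n + 1) = 0 := hene _ (by omega)
              rw [if_neg (by omega : ¬ n = n - 1)]
              simp only [jacA, if_neg hn0, hen, e1, e2]
              ring
          · by_cases hk3 : k = n - 1
            · have hn0 : ¬ (n = 0) := by omega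
              have hkn : k + 1 = n := by omega
              have e1 : (e : ℕ → ℂ) (k + 1) = 1 := by rw [hkn]; exact hen
              have e2 : (e : ℕ → ℂ) k = 0 := hene _ (by omega)
              rw [if_neg hk1, if_neg hk2, if_pos hk3, if_neg hn0]
              by_cases hk0 : k = 0
              · subst hk0
                simp only [jacA, if_pos rfl, e1, e2, if_true]
                have : n - 1 = 0 := by omega
                rw [this, hkn]
                ring
              · have e3 : (e : ℕ → ℂ) (k - 1) = 0 := hene _ (by omega)
                simp only [jacA, if_neg hk0, e1, e2, e3]
                have : n - 1 = k := by omega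
                rw [this, hkn]
                ring
            · rw [if_neg hk1, if_neg hk2, if_neg hk3]
              by_cases hk0 : k = 0
              · subst hk0
                have e1 : (e : ℕ → ℂ) 0 = 0 := hene _ (by omega)
                have e2 : (e : ℕ → ℂ) 1 = 0 := hene _ (by omega)
                simp only [jacA, if_pos rfl, e1, e2, if_true]
                ring
              · have e1 : (e : ℕ → ℂ) (k - 1) = 0 := hene _ (by omega)
                have e2 : (e : ℕ → ℂ) k = 0 := hene _ (by omega)
                have e3 : (e : ℕ → ℂ) (k + 1) = 0 := hene _ (by omega)
                simp only [jacA, if_neg hk0, e1, e2, e3]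
                ring
      rw [tsum_congr hterm]
      have hs1 : Summable (fun k => if k = n+1 then (a n : ℂ) * conj (u (n+1)) else 0) :=
        summable_of_ne_finset_zero (s := {n+1}) (fun k hk => if_neg (by simpa using hk))
      have hs2 : Summable (fun k => if k = n then (b n : ℂ) * conj (u n) else 0) :=
        summable_of_ne_finset_zero (s := {n}) (fun k hk => if_neg (by simpa using hk))
      have hs3 : Summable (fun k => if k = n-1 then
          (if n = 0 then 0 else (a (n-1) : ℂ) * conj (u (n-1))) else 0) :=
        summable_of_ne_finset_zero (s := {n-1}) (fun k hk => if_neg (by simpa using hk))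
      rw [Summable.tsum_add (hs1.add hs2) hs3, Summable.tsum_add hs1 hs2, tsum_ite_eq, tsum_ite_eq, tsum_ite_eq]
    rw [hL, hR] at hfa
    exact hfa.symm
  -- Step 2: the eigenvalue equation itself
  have hrec : ∀ n : ℕ, (a n : ℂ) * u (n+1) + (b n : ℂ) * u n
      + (if n = 0 then 0 else (a (n-1) : ℂ) * u (n-1)) = z * u n := by
    intro n
    have h := congrArg (starRingEnd ℂ) (hconj n)
    simpa only [map_add, map_mul, Complex.conj_ofReal, Complex.conj_conj, apply_ite
      (starRingEnd ℂ), map_zero] using h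
  -- Step 3: Wronskian identity
  have hW : ∀ n : ℕ, (a n : ℂ) * (conj (u n) * u (n+1) - u n * conj (u (n+1)))
      = (z - conj z) * ((∑ k ∈ Finset.range (n+1), Complex.normSq (u k) : ℝ) : ℂ) := by
    intro n
    induction n with
    | zero =>
      have h1 := hrec 0
      have h2 := hconj 0
      rw [if_pos rfl] at h1 h2
      simp only [zero_add, Finset.sum_range_one, Complex.normSq_eq_conj_mul_self]
      linear_combination conj (u 0) * h1 - u 0 * h2
    | succ n ih =>
      have h1 := hrec (n+1)
      have h2 := hconj (n+1)
      rw [if_neg (by omega), Nat.add_sub_cancel] at h1 h2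
      rw [Finset.sum_range_succ, Complex.ofReal_add, Complex.normSq_eq_conj_mul_self]
      linear_combination ih + conj (u (n+1)) * h1 - u (n+1) * h2
  -- Step 4: contradiction if u ≠ 0
  by_contra hy0
  have hex : ∃ n, u n ≠ 0 := by
    by_contra h
    push_neg at h
    exact hy0 (lp.ext (funext h))
  obtain ⟨n₀, hn₀⟩ := hex
  set c0 : ℝ := Complex.normSq (u n₀) with hc0def
  have hc0 : 0 < c0 := Complex.normSq_pos.mpr hn₀
  have habs : ‖z - conj z‖ = 2 := by
    rcases hz with rfl | rfl
    · rw [Complex.conj_I, sub_neg_eq_add, ← two_mul, norm_mul]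
      simp
    · rw [show (-Complex.I - conj (-Complex.I)) = -(2 * Complex.I) by
        rw [map_neg, Complex.conj_I]; ring, norm_neg, norm_mul]
      simp
  have hbound : ∀ n, n₀ ≤ n → 1 / a n ≤ (‖u n‖^2 + ‖u (n+1)‖^2) / (2 * c0) := by
    intro n hn
    have hsum_nonneg : ∀ k ∈ Finset.range (n+1), (0:ℝ) ≤ Complex.normSq (u k) :=
      fun k _ => Complex.normSq_nonneg _
    have hsum_ge : c0 ≤ ∑ k ∈ Finset.range (n+1), Complex.normSq (u k) :=
      Finset.single_le_sum hsum_nonneg (Finset.mem_range.mpr (by omega))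
    have h1 : 2 * c0 ≤ ‖(a n : ℂ) * (conj (u n) * u (n+1) - u n * conj (u (n+1)))‖ := by
      rw [hW n, norm_mul, habs]
      have hnn : (0:ℝ) ≤ ∑ k ∈ Finset.range (n+1), Complex.normSq (u k) :=
        Finset.sum_nonneg hsum_nonneg
      rw [Complex.norm_real, Real.norm_eq_abs, abs_of_nonneg hnn]
      linarith
    have h2 : ‖(a n : ℂ) * (conj (u n) * u (n+1) - u n * conj (u (n+1)))‖
        ≤ a n * (2 * ‖u n‖ * ‖u (n+1)‖) := by
      rw [norm_mul, Complex.norm_real, Real.norm_eq_abs, abs_of_pos (ha n)]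
      refine mul_le_mul_of_nonneg_left ?_ (ha n).le
      calc ‖conj (u n) * u (n+1) - u n * conj (u (n+1))‖
          ≤ ‖conj (u n) * u (n+1)‖ + ‖u n * conj (u (n+1))‖ := norm_sub_le _ _
        _ = 2 * ‖u n‖ * ‖u (n+1)‖ := by
            rw [norm_mul, norm_mul, RCLike.norm_conj, RCLike.norm_conj]; ring
    have h3 := h1.trans h2
    rw [div_le_div_iff₀ (ha n) (mul_pos two_pos hc0)]
    nlinarith [mul_nonneg (ha n).le (sq_nonneg (‖u n‖ - ‖u (n+1)‖)),
      norm_nonneg (u n), norm_nonneg (u (n+1))]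
  have hsumsq : Summable (fun k => ‖u k‖^2) := by
    have h := (lp.memℓp (y : L2 ℕ)).summable (by norm_num)
    have h2 : ∀ k : ℕ, ‖u k‖ ^ (2:ENNReal).toReal = ‖u k‖^2 := by
      intro k
      rw [show ((2:ENNReal)).toReal = ((2:ℕ):ℝ) by norm_num, Real.rpow_natCast]
    exact Summable.congr h h2
  have hsum2 : Summable (fun k => (‖u k‖^2 + ‖u (k+1)‖^2) / (2 * c0)) :=
    (hsumsq.add ((summable_nat_add_iff 1).mpr hsumsq)).div_const _
  have htail : Summable (fun m => 1 / a (m + n₀)) := by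
    refine Summable.of_nonneg_of_le (fun m => div_nonneg zero_le_one (ha _).le)
      (fun m => hbound (m + n₀) (Nat.le_add_left _ _)) ?_
    exact (summable_nat_add_iff n₀).mpr hsum2
  exact hdiv ((summable_nat_add_iff n₀).mp htail)

end JacobiConcrete

/-- A Jacobi matrix with positive off-diagonal entries `a_n` satisfying
`Σ 1/a_n = ∞` and real diagonal entries is essentially self-adjoint on the finitely
supported sequences. -/
theorem jacobi_essentially_selfadjoint (a b : ℕ → ℝ) (ha : ∀ n, 0 < a n)
    (hdiv : ¬ Summable (fun n => 1 / a n)) :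
    EssSelfAdj (jacOp a b) := by
  have hd : Dense (((jacOp a b).domain : Submodule ℂ (L2 ℕ)) : Set (L2 ℕ)) := dense_Cc
  exact essSelfAdj_of_ker hd (jacOp_isSymm a b) (fun z hz y hy => jac_ker a b ha hdiv z hz y hy)

end DefIdx
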